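/- Let n ≥ 4 be an integer and x ≥ 0 a real number. Then the second central moment of the second-order modified Baskakov–Durrmeyer operator satisfies V̂_{n,2}((t−x)²; x) = (−3 − 16x − 16x²)/((n−2)(n−3)), where the operator is applied to the function t ↦ (t − x)². -/

import Mathlib

open MeasureTheory Filter Topology

/-- Baskakov basis function `p_{n,k}(x) = C(n+k-1, k) x^k / (1+x)^{n+k}`. -/
noncomputable def bask (n k : ℕ) (x : ℝ) : ℝ :=
  (Nat.choose (n + k - 1) k : ℝ) * x ^ k / (1 + x) ^ (n + k)

open Set

lemma fact_cast_succ (a : ℕ) : (((a+1)).factorial : ℝ) = ((a:ℝ)+1) * a.factorial := by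
  rw [Nat.factorial_succ]; push_cast; ring

lemma fact_ne (a : ℕ) : ((a.factorial : ℝ)) ≠ 0 :=
  Nat.cast_ne_zero.mpr a.factorial_ne_zero

lemma Jkey : ∀ a b : ℕ, a + 2 ≤ b →
    IntegrableOn (fun t : ℝ => t ^ a / (1 + t) ^ b) (Ioi 0) ∧
    ∫ t in Ioi (0:ℝ), t ^ a / (1 + t) ^ b
      = (a.factorial : ℝ) * (b - a - 2).factorial / (b - 1).factorial := by
  intro a
  induction a with
  | zero =>
    intro b hb
    obtain ⟨c, rfl⟩ : ∃ c, b = c + 2 := ⟨b - 2, by omega⟩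
    set g : ℝ → ℝ := fun t => (-((c:ℝ)+1)⁻¹) * ((1+t)^(c+1))⁻¹ with hg
    have hderiv : ∀ y ∈ Ici (0:ℝ), HasDerivAt g (y^0/(1+y)^(c+2)) y := by
      intro y hy
      have h1y : (0:ℝ) < 1 + y := by simp only [mem_Ici] at hy; linarith
      have h1 : HasDerivAt (fun t : ℝ => 1 + t) 1 y := (hasDerivAt_id y).const_add 1
      have h2 : HasDerivAt (fun t : ℝ => (1+t)^(c+1))
          (((c+1 : ℕ):ℝ) * (1+y)^(c+1-1) * 1) y := h1.pow (c+1)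
      have h3 := (h2.inv (pow_ne_zero _ h1y.ne')).const_mul (-((c:ℝ)+1)⁻¹)
      refine h3.congr_deriv ?_
      symm
      have hsq : ((1+y)^(c+1))^2 = (1+y)^(c+2) * (1+y)^c := by
        rw [← pow_mul, ← pow_add]; congr 1; omega
      simp only [Nat.add_sub_cancel, mul_one]
      push_cast
      rw [hsq]
      have hc1 : ((c:ℝ)+1) ≠ 0 := by positivity
      field_simp
      try ring
    have gpos : ∀ y ∈ Ioi (0:ℝ), 0 ≤ y^0/(1+y)^(c+2) := by
      intro y hy; simp only [mem_Ioi] at hy; positivity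
    have htend : Tendsto g atTop (𝓝 0) := by
      have h1 : Tendsto (fun t : ℝ => (1+t)^(c+1)) atTop atTop :=
        (tendsto_pow_atTop (Nat.succ_ne_zero c)).comp
          (tendsto_atTop_add_const_left _ 1 tendsto_id)
      have h2 : Tendsto (fun t : ℝ => (-((c:ℝ)+1)⁻¹) * ((1+t)^(c+1))⁻¹) atTop
          (𝓝 ((-((c:ℝ)+1)⁻¹) * 0)) := (h1.inv_tendsto_atTop).const_mul _
      rw [hg]
      simpa using h2
    have hval := integral_Ioi_of_hasDerivAt_of_nonneg' hderiv gpos htend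
    have hint := integrableOn_Ioi_deriv_of_nonneg' hderiv gpos htend
    constructor
    · exact hint
    · rw [hval]
      have e1 : c + 2 - 0 - 2 = c := by omega
      have e2 : c + 2 - 1 = c + 1 := by omega
      rw [e1, e2, hg]
      simp only [add_zero, one_pow, inv_one, mul_one, fact_cast_succ]
      have hc1 : ((c:ℝ)+1) ≠ 0 := by positivity
      field_simp [Nat.factorial_zero]
      simp
  | succ a ih =>
    intro b hb
    obtain ⟨h1i, h1v⟩ := ih (b-1) (by omega)
    obtain ⟨h2i, h2v⟩ := ih b (by omega)
    obtain ⟨c, rfl⟩ : ∃ c, b = a + 3 + c := ⟨b - (a+3), by omega⟩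
    have e1 : a + 3 + c - 1 = a + 2 + c := by omega
    rw [e1] at h1i h1v
    have hfun : EqOn (fun t : ℝ => t^(a+1)/(1+t)^(a+3+c))
        (fun t : ℝ => t^a/(1+t)^(a+2+c) - t^a/(1+t)^(a+3+c)) (Ioi 0) := by
      intro t ht
      have h1t : (0:ℝ) < 1 + t := by simp only [mem_Ioi] at ht; linarith
      have hp : (1+t)^(a+3+c) = (1+t)^(a+2+c) * (1+t) := by
        rw [← pow_succ]; congr 1; omega
      simp only
      rw [hp]
      field_simp
      ring
    constructor
    · exact IntegrableOn.congr_fun (h1i.sub h2i) (fun t ht => (hfun ht).symm) measurableSet_Ioi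
    · rw [setIntegral_congr_fun measurableSet_Ioi hfun, integral_sub h1i h2i, h1v, h2v]
      have e2 : a + 2 + c - a - 2 = c := by omega
      have e3 : a + 2 + c - 1 = a + 1 + c := by omega
      have e4 : a + 3 + c - a - 2 = c + 1 := by omega
      have e5 : a + 3 + c - (a+1) - 2 = c := by omega
      have e6 : a + 3 + c - 1 = a + 2 + c := by omega
      rw [e2, e3, e4, e5, e6]
      have f1 : ((a+2+c).factorial : ℝ) = ((a:ℝ)+2+c) * (a+1+c).factorial := by
        rw [show a+2+c = (a+1+c)+1 by omega, fact_cast_succ]; push_cast; ring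
      have f2 : ((c+1).factorial : ℝ) = ((c:ℝ)+1) * c.factorial := fact_cast_succ c
      have f3 : ((a+1).factorial : ℝ) = ((a:ℝ)+1) * a.factorial := fact_cast_succ a
      rw [f1, f2, f3]
      have n1 := fact_ne (a+1+c)
      have n2 := fact_ne c
      have n3 : ((a:ℝ)+2+c) ≠ 0 := by positivity
      field_simp
      ring


lemma bask_integrable (n k m : ℕ) (h : m + 2 ≤ n) :
    IntegrableOn (fun t : ℝ => bask n k t * t ^ m) (Ioi 0) := by
  have heq : (fun t : ℝ => bask n k t * t ^ m)
      = fun t => ((n+k-1).choose k : ℝ) * (t^(k+m)/(1+t)^(n+k)) := by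
    funext t; unfold bask; rw [pow_add]; ring
  rw [heq]
  exact (Jkey (k+m) (n+k) (by omega)).1.const_mul _

lemma bask_integral (n k m : ℕ) (h : m + 2 ≤ n) :
    ∫ t in Ioi (0:ℝ), bask n k t * t ^ m
      = ((n+k-1).choose k : ℝ) * ((k+m).factorial * (n - m - 2).factorial
          / (n+k-1).factorial) := by
  have heq : (fun t : ℝ => bask n k t * t ^ m)
      = fun t => ((n+k-1).choose k : ℝ) * (t^(k+m)/(1+t)^(n+k)) := by
    funext t; unfold bask; rw [pow_add]; ring
  rw [heq, integral_const_mul, (Jkey (k+m) (n+k) (by omega)).2]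
  rw [show n + k - (k+m) - 2 = n - m - 2 by omega, show n + k - 1 = n + k - 1 from rfl]

lemma fact3 (q : ℕ) : (((q+3).factorial : ℝ)) = ((q:ℝ)+3)*((q:ℝ)+2)*((q:ℝ)+1) * q.factorial := by
  rw [show q+3 = (q+2)+1 by omega, fact_cast_succ, show q+2 = (q+1)+1 by omega,
    fact_cast_succ, fact_cast_succ]
  push_cast; ring

lemma fact2 (q : ℕ) : (((q+2).factorial : ℝ)) = ((q:ℝ)+2)*((q:ℝ)+1) * q.factorial := by
  rw [show q+2 = (q+1)+1 by omega, fact_cast_succ, fact_cast_succ]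
  push_cast; ring

lemma int0 (n k : ℕ) (hn : 4 ≤ n) :
    ∫ t in Ioi (0:ℝ), bask n k t = 1/((n:ℝ)-1) := by
  obtain ⟨q, rfl⟩ : ∃ q, n = q + 4 := ⟨n - 4, by omega⟩
  have h := bask_integral (q+4) k 0 (by omega)
  simp only [pow_zero, mul_one] at h
  rw [h, show q+4+k-1 = q+k+3 by omega, show q+4-0-2 = q+2 by omega, show k+0 = k from rfl,
    Nat.cast_choose ℝ (show k ≤ q+k+3 by omega), show q+k+3-k = q+3 by omega,
    fact3 q, fact2 q]
  have n1 := fact_ne k; have n2 := fact_ne q; have n3 := fact_ne (q+k+3)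
  set K := (k.factorial : ℝ)
  set Q := (q.factorial : ℝ)
  set A := ((q+k+3).factorial : ℝ)
  have p1 : ((q:ℝ)+1) ≠ 0 := by positivity
  have p2 : ((q:ℝ)+2) ≠ 0 := by positivity
  have p3 : ((q:ℝ)+3) ≠ 0 := by positivity
  push_cast
  rw [show ((q:ℝ)+4)-1 = (q:ℝ)+3 by ring]
  field_simp

lemma int1 (n k : ℕ) (hn : 4 ≤ n) :
    ∫ t in Ioi (0:ℝ), bask n k t * t = ((k:ℝ)+1)/(((n:ℝ)-1)*((n:ℝ)-2)) := by
  obtain ⟨q, rfl⟩ : ∃ q, n = q + 4 := ⟨n - 4, by omega⟩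
  have h := bask_integral (q+4) k 1 (by omega)
  simp only [pow_one] at h
  rw [h, show q+4+k-1 = q+k+3 by omega, show q+4-1-2 = q+1 by omega,
    Nat.cast_choose ℝ (show k ≤ q+k+3 by omega), show q+k+3-k = q+3 by omega,
    fact3 q, fact_cast_succ q, fact_cast_succ k]
  have n1 := fact_ne k; have n2 := fact_ne q; have n3 := fact_ne (q+k+3)
  set K := (k.factorial : ℝ)
  set Q := (q.factorial : ℝ)
  set A := ((q+k+3).factorial : ℝ)
  have p1 : ((q:ℝ)+1) ≠ 0 := by positivity
  have p2 : ((q:ℝ)+2) ≠ 0 := by positivity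
  have p3 : ((q:ℝ)+3) ≠ 0 := by positivity
  push_cast
  rw [show ((q:ℝ)+4)-1 = (q:ℝ)+3 by ring, show ((q:ℝ)+4)-2 = (q:ℝ)+2 by ring]
  field_simp

lemma int2 (n k : ℕ) (hn : 4 ≤ n) :
    ∫ t in Ioi (0:ℝ), bask n k t * t^2
      = ((k:ℝ)+1)*((k:ℝ)+2)/(((n:ℝ)-1)*((n:ℝ)-2)*((n:ℝ)-3)) := by
  obtain ⟨q, rfl⟩ : ∃ q, n = q + 4 := ⟨n - 4, by omega⟩
  have h := bask_integral (q+4) k 2 (by omega)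
  rw [h, show q+4+k-1 = q+k+3 by omega, show q+4-2-2 = q by omega,
    Nat.cast_choose ℝ (show k ≤ q+k+3 by omega), show q+k+3-k = q+3 by omega,
    fact3 q, fact2 k]
  have n1 := fact_ne k; have n2 := fact_ne q; have n3 := fact_ne (q+k+3)
  set K := (k.factorial : ℝ)
  set Q := (q.factorial : ℝ)
  set A := ((q+k+3).factorial : ℝ)
  have p1 : ((q:ℝ)+1) ≠ 0 := by positivity
  have p2 : ((q:ℝ)+2) ≠ 0 := by positivity
  have p3 : ((q:ℝ)+3) ≠ 0 := by positivity
  push_cast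
  rw [show ((q:ℝ)+4)-1 = (q:ℝ)+3 by ring, show ((q:ℝ)+4)-2 = (q:ℝ)+2 by ring,
    show ((q:ℝ)+4)-3 = (q:ℝ)+1 by ring]
  field_simp

lemma hasSum_bask (m : ℕ) (hm : 1 ≤ m) (x : ℝ) (hx : 0 ≤ x) :
    HasSum (fun k => bask m k x) 1 := by
  obtain ⟨j, rfl⟩ : ∃ j, m = j + 1 := ⟨m - 1, by omega⟩
  have h1x : (0:ℝ) < 1 + x := by linarith
  have hy : ‖x/(1+x)‖ < 1 := by
    rw [Real.norm_eq_abs, abs_of_nonneg (by positivity), div_lt_one h1x]; linarith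
  have H := (hasSum_choose_mul_geometric_of_norm_lt_one (𝕜 := ℝ) j hy).mul_left
    ((1/(1+x):ℝ)^(j+1))
  have h1y : 1 - x/(1+x) = 1/(1+x) := by field_simp; ring
  have hb : ∀ k, bask (j+1) k x
      = (1/(1+x))^(j+1) * (((k + j).choose j : ℝ) * (x/(1+x))^k) := by
    intro k
    unfold bask
    rw [show j+1+k-1 = k+j by omega, ← Nat.choose_symm_add, div_pow, div_pow, one_pow,
      show (j+1)+k = (j+1)+k from rfl, pow_add]
    field_simp
  have hval : (1/(1+x):ℝ)^(j+1) * (1 / (1 - x/(1+x)) ^ (j + 1)) = 1 := by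
    rw [h1y]; field_simp
  rw [show (1:ℝ) = (1/(1+x):ℝ)^(j+1) * (1 / (1 - x/(1+x)) ^ (j + 1)) from hval.symm,
    show (fun k => bask (j+1) k x)
      = fun k => (1/(1+x):ℝ)^(j+1) * (((k + j).choose j : ℝ) * (x/(1+x))^k) from funext hb]
  exact H

lemma hasSum_k_bask (m : ℕ) (hm : 1 ≤ m) (x : ℝ) (hx : 0 ≤ x) :
    HasSum (fun k : ℕ => (k:ℝ) * bask m k x) ((m:ℝ) * x) := by
  obtain ⟨j, rfl⟩ : ∃ j, m = j + 1 := ⟨m - 1, by omega⟩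
  have h1x : (0:ℝ) < 1 + x := by linarith
  have key : ∀ k : ℕ, (((k+1:ℕ)):ℝ) * bask (j+1) (k+1) x
      = ((j:ℝ)+1) * x * bask (j+1+1) k x := by
    intro k
    have natid : (j+k+1).choose (k+1) * (k+1) = (j+k+1).choose k * (j+1) := by
      have := Nat.choose_succ_right_eq (j+k+1) k
      rw [this, show j+k+1-k = j+1 by omega]
    have hcast : ((j+k+1).choose (k+1) : ℝ) * ((k:ℝ)+1)
        = ((j+k+1).choose k : ℝ) * ((j:ℝ)+1) := by exact_mod_cast natid
    unfold bask
    rw [show j+1+(k+1)-1 = j+k+1 by omega, show j+1+1+k-1 = j+k+1 by omega,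
      show j+1+(k+1) = j+k+2 by omega, show j+1+1+k = j+k+2 by omega]
    push_cast
    have num : ((k:ℝ)+1) * (((j+k+1).choose (k+1) : ℝ) * x^(k+1))
        = ((j:ℝ)+1) * x * (((j+k+1).choose k : ℝ) * x^k) := by
      linear_combination x^(k+1) * hcast
    calc ((k:ℝ)+1) * (((j+k+1).choose (k+1) : ℝ) * x^(k+1) / (1+x)^(j+k+2))
        = (((k:ℝ)+1) * (((j+k+1).choose (k+1) : ℝ) * x^(k+1))) / (1+x)^(j+k+2) := by ring
      _ = (((j:ℝ)+1) * x * (((j+k+1).choose k : ℝ) * x^k)) / (1+x)^(j+k+2) := by rw [num]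
      _ = ((j:ℝ)+1) * x * (((j+k+1).choose k : ℝ) * x^k / (1+x)^(j+k+2)) := by ring
  have base := (hasSum_bask (j+1+1) (by omega) x hx).mul_left (((j:ℝ)+1) * x)
  have shift : HasSum (fun k : ℕ => (((k+1:ℕ)):ℝ) * bask (j+1) (k+1) x) (((j:ℝ)+1) * x) := by
    rw [funext key]
    simpa using base
  have h2 := (hasSum_nat_add_iff (f := fun k : ℕ => (k:ℝ) * bask (j+1) k x) 1).mp shift
  simp only [Finset.range_one, Finset.sum_singleton, Nat.cast_zero, zero_mul, add_zero] at h2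
  exact_mod_cast h2

lemma hasSum_kk_bask (m : ℕ) (hm : 1 ≤ m) (x : ℝ) (hx : 0 ≤ x) :
    HasSum (fun k : ℕ => (k:ℝ) * ((k:ℝ)-1) * bask m k x) ((m:ℝ) * ((m:ℝ)+1) * x^2) := by
  obtain ⟨j, rfl⟩ : ∃ j, m = j + 1 := ⟨m - 1, by omega⟩
  have h1x : (0:ℝ) < 1 + x := by linarith
  have key : ∀ k : ℕ, (((k+2:ℕ)):ℝ) * ((((k+2:ℕ)):ℝ) - 1) * bask (j+1) (k+2) x
      = ((j:ℝ)+1) * ((j:ℝ)+2) * x^2 * bask (j+1+2) k x := by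
    intro k
    have nat1 : (j+k+2).choose (k+2) * (k+2) = (j+k+2).choose (k+1) * (j+1) := by
      have := Nat.choose_succ_right_eq (j+k+2) (k+1)
      rw [this, show j+k+2-(k+1) = j+1 by omega]
    have nat2 : (j+k+2).choose (k+1) * (k+1) = (j+k+2).choose k * (j+2) := by
      have := Nat.choose_succ_right_eq (j+k+2) k
      rw [this, show j+k+2-k = j+2 by omega]
    have natid : (j+k+2).choose (k+2) * ((k+2) * (k+1))
        = (j+k+2).choose k * ((j+1) * (j+2)) := by
      calc (j+k+2).choose (k+2) * ((k+2) * (k+1))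
          = ((j+k+2).choose (k+2) * (k+2)) * (k+1) := by ring
        _ = ((j+k+2).choose (k+1) * (k+1)) * (j+1) := by rw [nat1]; ring
        _ = ((j+k+2).choose k * (j+2)) * (j+1) := by rw [nat2]
        _ = (j+k+2).choose k * ((j+1) * (j+2)) := by ring
    have hcast : ((j+k+2).choose (k+2) : ℝ) * (((k:ℝ)+2) * ((k:ℝ)+1))
        = ((j+k+2).choose k : ℝ) * (((j:ℝ)+1) * ((j:ℝ)+2)) := by exact_mod_cast natid
    unfold bask
    rw [show j+1+(k+2)-1 = j+k+2 by omega, show j+1+2+k-1 = j+k+2 by omega,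
      show j+1+(k+2) = j+k+3 by omega, show j+1+2+k = j+k+3 by omega]
    push_cast
    have num : ((k:ℝ)+2) * (((k:ℝ)+2) - 1) * (((j+k+2).choose (k+2) : ℝ) * x^(k+2))
        = ((j:ℝ)+1) * ((j:ℝ)+2) * x^2 * (((j+k+2).choose k : ℝ) * x^k) := by
      linear_combination x^(k+2) * hcast
    calc ((k:ℝ)+2) * (((k:ℝ)+2) - 1) * (((j+k+2).choose (k+2) : ℝ) * x^(k+2) / (1+x)^(j+k+3))
        = (((k:ℝ)+2) * (((k:ℝ)+2) - 1) * (((j+k+2).choose (k+2) : ℝ) * x^(k+2))) / (1+x)^(j+k+3) := by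
          ring
      _ = (((j:ℝ)+1) * ((j:ℝ)+2) * x^2 * (((j+k+2).choose k : ℝ) * x^k)) / (1+x)^(j+k+3) := by
          rw [num]
      _ = ((j:ℝ)+1) * ((j:ℝ)+2) * x^2 * (((j+k+2).choose k : ℝ) * x^k / (1+x)^(j+k+3)) := by
          ring
  have base := (hasSum_bask (j+1+2) (by omega) x hx).mul_left (((j:ℝ)+1) * ((j:ℝ)+2) * x^2)
  have shift : HasSum (fun k : ℕ => (((k+2:ℕ)):ℝ) * ((((k+2:ℕ)):ℝ) - 1) * bask (j+1) (k+2) x)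
      (((j:ℝ)+1) * ((j:ℝ)+2) * x^2) := by
    rw [funext key]
    simpa using base
  have h2 := (hasSum_nat_add_iff
    (f := fun k : ℕ => (k:ℝ) * ((k:ℝ)-1) * bask (j+1) k x) 2).mp shift
  have hz : ∑ i ∈ Finset.range 2, (i:ℝ) * ((i:ℝ)-1) * bask (j+1) i x = 0 := by
    simp [Finset.sum_range_succ]
  rw [hz, add_zero] at h2
  have e2 : ((j+1:ℕ):ℝ) * (((j+1:ℕ):ℝ)+1) * x^2 = ((j:ℝ)+1)*((j:ℝ)+2)*x^2 := by
    push_cast; ring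
  rw [e2]; exact h2

lemma hasSum_poly_bask (m : ℕ) (hm : 1 ≤ m) (x : ℝ) (hx : 0 ≤ x) (a b c : ℝ) :
    HasSum (fun k : ℕ => (a * ((k:ℝ) * ((k:ℝ)-1)) + b * (k:ℝ) + c) * bask m k x)
      (a * ((m:ℝ) * ((m:ℝ)+1) * x^2) + b * ((m:ℝ) * x) + c) := by
  have h := (((hasSum_kk_bask m hm x hx).mul_left a).add
    ((hasSum_k_bask m hm x hx).mul_left b)).add ((hasSum_bask m hm x hx).mul_left c)
  have e : (fun k : ℕ => (a * ((k:ℝ) * ((k:ℝ)-1)) + b * (k:ℝ) + c) * bask m k x)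
      = fun k : ℕ => (a * ((k:ℝ) * ((k:ℝ)-1) * bask m k x) + b * ((k:ℝ) * bask m k x))
        + c * bask m k x := funext fun k => by ring
  rw [e]
  rw [mul_one] at h
  exact h


/-- Second-order modified basis
`p^2_{n,k}(x) = (3/2 + 2x - n x(1+x)) p_{n+2,k}(x) + 2n x(1+x) p_{n+2,k-1}(x)
  + (-1/2 - 2x - n x(1+x)) p_{n+2,k-2}(x)`, with `p_{n+2,j} = 0` for `j < 0`. -/
noncomputable def p2 (n k : ℕ) (x : ℝ) : ℝ :=
  (3 / 2 + 2 * x - (n : ℝ) * x * (1 + x)) * bask (n + 2) k x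
    + 2 * (n : ℝ) * x * (1 + x) * (if k = 0 then 0 else bask (n + 2) (k - 1) x)
    + (-(1 / 2) - 2 * x - (n : ℝ) * x * (1 + x)) * (if k < 2 then 0 else bask (n + 2) (k - 2) x)

/-- Second-order modified Baskakov–Durrmeyer operator. -/
noncomputable def V2 (n : ℕ) (f : ℝ → ℝ) (x : ℝ) : ℝ :=
  ((n : ℝ) - 1) * ∑' k : ℕ, p2 n k x * ∫ t in Set.Ioi (0 : ℝ), bask n k t * f t

set_option maxHeartbeats 1000000 in
theorem V2_central_moment_two (n : ℕ) (hn : 4 ≤ n) (x : ℝ) (hx : 0 ≤ x) :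
    V2 n (fun t => (t - x) ^ 2) x =
      (-3 - 16 * x - 16 * x ^ 2) / (((n : ℝ) - 2) * ((n : ℝ) - 3)) := by
  have h1x : (0:ℝ) < 1 + x := by linarith
  have hn4 : (4:ℝ) ≤ (n:ℝ) := by exact_mod_cast hn
  set g : ℕ → ℝ := fun k => ((k:ℝ)+1)*((k:ℝ)+2)/(((n:ℝ)-1)*((n:ℝ)-2)*((n:ℝ)-3))
    - 2*x*(((k:ℝ)+1)/(((n:ℝ)-1)*((n:ℝ)-2))) + x^2*(1/((n:ℝ)-1)) with hg
  -- Step 1: integrals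
  have hint : ∀ k : ℕ, (∫ t in Set.Ioi (0:ℝ), bask n k t * (t - x)^2) = g k := by
    intro k
    have i2 := bask_integrable n k 2 (by omega)
    have i1 := bask_integrable n k 1 (by omega)
    have i0 := bask_integrable n k 0 (by omega)
    simp only [pow_one] at i1
    simp only [pow_zero, mul_one] at i0
    have e : (fun t : ℝ => bask n k t * (t - x)^2)
        = fun t : ℝ => (bask n k t * t^2 - 2*x*(bask n k t * t)) + x^2 * bask n k t :=
      funext fun t => by ring
    have isub : IntegrableOn (fun t : ℝ => bask n k t * t^2 - 2*x*(bask n k t * t)) (Ioi 0) :=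
      i2.sub (i1.const_mul (2*x))
    have imul : IntegrableOn (fun t : ℝ => 2*x*(bask n k t * t)) (Ioi 0) := i1.const_mul (2*x)
    have imul0 : IntegrableOn (fun t : ℝ => x^2 * bask n k t) (Ioi 0) := i0.const_mul (x^2)
    rw [show (∫ t in Set.Ioi (0:ℝ), bask n k t * (t - x)^2)
        = ∫ t in Set.Ioi (0:ℝ), ((bask n k t * t^2 - 2*x*(bask n k t * t))
          + x^2 * bask n k t) from by rw [← e],
      integral_add isub imul0, integral_sub i2 imul, integral_const_mul, integral_const_mul,
      int2 n k hn, int1 n k hn, int0 n k hn, hg]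
  -- Step 2: rewrite V2
  have hV : V2 n (fun t => (t - x)^2) x = ((n:ℝ)-1) * ∑' k : ℕ, p2 n k x * g k := by
    unfold V2
    congr 1
    apply tsum_congr
    intro k
    congr 1
    simpa using hint k
  -- Step 3: the three HasSum results
  have hm : 1 ≤ n + 2 := by omega
  have HA : HasSum (fun k : ℕ => bask (n+2) k x * g k)
      ((1/(((n:ℝ)-1)*((n:ℝ)-2)*((n:ℝ)-3))) * (((n+2:ℕ):ℝ) * (((n+2:ℕ):ℝ)+1) * x^2)
        + (4/(((n:ℝ)-1)*((n:ℝ)-2)*((n:ℝ)-3)) - 2*x/(((n:ℝ)-1)*((n:ℝ)-2))) * (((n+2:ℕ):ℝ) * x)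
        + (2/(((n:ℝ)-1)*((n:ℝ)-2)*((n:ℝ)-3)) - 2*x/(((n:ℝ)-1)*((n:ℝ)-2))
            + x^2*(1/((n:ℝ)-1)))) := by
    have h := hasSum_poly_bask (n+2) hm x hx (1/(((n:ℝ)-1)*((n:ℝ)-2)*((n:ℝ)-3)))
      (4/(((n:ℝ)-1)*((n:ℝ)-2)*((n:ℝ)-3)) - 2*x/(((n:ℝ)-1)*((n:ℝ)-2)))
      (2/(((n:ℝ)-1)*((n:ℝ)-2)*((n:ℝ)-3)) - 2*x/(((n:ℝ)-1)*((n:ℝ)-2)) + x^2*(1/((n:ℝ)-1)))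
    have e : (fun k : ℕ => ((1/(((n:ℝ)-1)*((n:ℝ)-2)*((n:ℝ)-3))) * ((k:ℝ) * ((k:ℝ)-1))
        + (4/(((n:ℝ)-1)*((n:ℝ)-2)*((n:ℝ)-3)) - 2*x/(((n:ℝ)-1)*((n:ℝ)-2))) * (k:ℝ)
        + (2/(((n:ℝ)-1)*((n:ℝ)-2)*((n:ℝ)-3)) - 2*x/(((n:ℝ)-1)*((n:ℝ)-2))
            + x^2*(1/((n:ℝ)-1)))) * bask (n+2) k x)
        = fun k : ℕ => bask (n+2) k x * g k := funext fun k => by rw [hg]; ring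
    rwa [e] at h
  have HB : HasSum (fun k : ℕ => (if k = 0 then 0 else bask (n+2) (k-1) x) * g k)
      ((1/(((n:ℝ)-1)*((n:ℝ)-2)*((n:ℝ)-3))) * (((n+2:ℕ):ℝ) * (((n+2:ℕ):ℝ)+1) * x^2)
        + (6/(((n:ℝ)-1)*((n:ℝ)-2)*((n:ℝ)-3)) - 2*x/(((n:ℝ)-1)*((n:ℝ)-2))) * (((n+2:ℕ):ℝ) * x)
        + (6/(((n:ℝ)-1)*((n:ℝ)-2)*((n:ℝ)-3)) - 4*x/(((n:ℝ)-1)*((n:ℝ)-2))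
            + x^2*(1/((n:ℝ)-1)))) := by
    have h := hasSum_poly_bask (n+2) hm x hx (1/(((n:ℝ)-1)*((n:ℝ)-2)*((n:ℝ)-3)))
      (6/(((n:ℝ)-1)*((n:ℝ)-2)*((n:ℝ)-3)) - 2*x/(((n:ℝ)-1)*((n:ℝ)-2)))
      (6/(((n:ℝ)-1)*((n:ℝ)-2)*((n:ℝ)-3)) - 4*x/(((n:ℝ)-1)*((n:ℝ)-2)) + x^2*(1/((n:ℝ)-1)))
    have e : (fun k : ℕ => (if k + 1 = 0 then 0 else bask (n+2) (k+1-1) x) * g (k+1))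
        = fun k : ℕ => ((1/(((n:ℝ)-1)*((n:ℝ)-2)*((n:ℝ)-3))) * ((k:ℝ) * ((k:ℝ)-1))
          + (6/(((n:ℝ)-1)*((n:ℝ)-2)*((n:ℝ)-3)) - 2*x/(((n:ℝ)-1)*((n:ℝ)-2))) * (k:ℝ)
          + (6/(((n:ℝ)-1)*((n:ℝ)-2)*((n:ℝ)-3)) - 4*x/(((n:ℝ)-1)*((n:ℝ)-2))
              + x^2*(1/((n:ℝ)-1)))) * bask (n+2) k x := by
      funext k
      rw [if_neg (Nat.succ_ne_zero k), Nat.add_sub_cancel, hg]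
      push_cast
      ring
    have hshift := h
    rw [← e] at hshift
    have h2 := (hasSum_nat_add_iff
      (f := fun k : ℕ => (if k = 0 then 0 else bask (n+2) (k-1) x) * g k) 1).mp hshift
    simpa using h2
  have HC : HasSum (fun k : ℕ => (if k < 2 then 0 else bask (n+2) (k-2) x) * g k)
      ((1/(((n:ℝ)-1)*((n:ℝ)-2)*((n:ℝ)-3))) * (((n+2:ℕ):ℝ) * (((n+2:ℕ):ℝ)+1) * x^2)
        + (8/(((n:ℝ)-1)*((n:ℝ)-2)*((n:ℝ)-3)) - 2*x/(((n:ℝ)-1)*((n:ℝ)-2))) * (((n+2:ℕ):ℝ) * x)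
        + (12/(((n:ℝ)-1)*((n:ℝ)-2)*((n:ℝ)-3)) - 6*x/(((n:ℝ)-1)*((n:ℝ)-2))
            + x^2*(1/((n:ℝ)-1)))) := by
    have h := hasSum_poly_bask (n+2) hm x hx (1/(((n:ℝ)-1)*((n:ℝ)-2)*((n:ℝ)-3)))
      (8/(((n:ℝ)-1)*((n:ℝ)-2)*((n:ℝ)-3)) - 2*x/(((n:ℝ)-1)*((n:ℝ)-2)))
      (12/(((n:ℝ)-1)*((n:ℝ)-2)*((n:ℝ)-3)) - 6*x/(((n:ℝ)-1)*((n:ℝ)-2)) + x^2*(1/((n:ℝ)-1)))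
    have e : (fun k : ℕ => (if k + 2 < 2 then 0 else bask (n+2) (k+2-2) x) * g (k+2))
        = fun k : ℕ => ((1/(((n:ℝ)-1)*((n:ℝ)-2)*((n:ℝ)-3))) * ((k:ℝ) * ((k:ℝ)-1))
          + (8/(((n:ℝ)-1)*((n:ℝ)-2)*((n:ℝ)-3)) - 2*x/(((n:ℝ)-1)*((n:ℝ)-2))) * (k:ℝ)
          + (12/(((n:ℝ)-1)*((n:ℝ)-2)*((n:ℝ)-3)) - 6*x/(((n:ℝ)-1)*((n:ℝ)-2))
              + x^2*(1/((n:ℝ)-1)))) * bask (n+2) k x := by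
      funext k
      rw [if_neg (by omega), Nat.add_sub_cancel, hg]
      push_cast
      ring
    have hshift := h
    rw [← e] at hshift
    have h2 := (hasSum_nat_add_iff
      (f := fun k : ℕ => (if k < 2 then 0 else bask (n+2) (k-2) x) * g k) 2).mp hshift
    have hz : ∑ i ∈ Finset.range 2, (if i < 2 then (0:ℝ) else bask (n+2) (i-2) x) * g i = 0 := by
      simp [Finset.sum_range_succ]
    rw [hz, add_zero] at h2
    exact h2
  -- Step 4: combine
  have Htot := ((HA.mul_left (3/2 + 2*x - (n:ℝ)*x*(1+x))).add
    (HB.mul_left (2*(n:ℝ)*x*(1+x)))).add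
    (HC.mul_left (-(1/2) - 2*x - (n:ℝ)*x*(1+x)))
  have ef : (fun k : ℕ => ((3/2 + 2*x - (n:ℝ)*x*(1+x)) * (bask (n+2) k x * g k)
      + (2*(n:ℝ)*x*(1+x)) * ((if k = 0 then 0 else bask (n+2) (k-1) x) * g k))
      + (-(1/2) - 2*x - (n:ℝ)*x*(1+x)) * ((if k < 2 then 0 else bask (n+2) (k-2) x) * g k))
      = fun k : ℕ => p2 n k x * g k := by
    funext k
    unfold p2
    ring
  rw [ef] at Htot
  rw [hV, Htot.tsum_eq]
  have hn1 : (n:ℝ) - 1 ≠ 0 := by nlinarith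
  have hn2 : (n:ℝ) - 2 ≠ 0 := by nlinarith
  have hn3 : (n:ℝ) - 3 ≠ 0 := by nlinarith
  push_cast
  field_simp
  ring
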